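/- For a parent-independent rate matrix γ_{ij} = (θ/2)(π_j − δ_{ij}) with probability vector π and θ > 0, the solution of δ_{rs}μ_r − |α|μ_{rs} + Σ_i(γ_{ir}μ_{is} + γ_{is}μ_{ir}) = 0 with μ_i = π_i/(2|α|) is μ_{ij} = π_i(|α|δ_{ij} + θπ_j)/(2α²(|α| + θ)). -/

import Mathlib

open Real

/-- Quasi-stationary second moments for a parent-independent rate matrix
`γ_{ij} = (θ/2)(p_j − δ_{ij})`: with `μ_i = p_i/(2|α|)`, the solution of
`δ_{rs}μ_r − |α|μ_{rs} + Σ_i(γ_{ir}μ_{is} + γ_{is}μ_{ir}) = 0` is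
`μ_{ij} = p_i(|α|δ_{ij} + θp_j)/(2α²(|α| + θ))`. -/
theorem subcritical_second_moments_PIM (d : ℕ) (α : ℝ) (hα : α < 0)
    (θ : ℝ) (hθ : 0 < θ) (p : Fin d → ℝ) (hp : ∀ i, 0 ≤ p i) (hpsum : ∑ i, p i = 1)
    (γ : Matrix (Fin d) (Fin d) ℝ)
    (hγ : ∀ i j, γ i j = θ / 2 * (p j - if i = j then 1 else 0))
    (μ : Fin d → ℝ) (hμ : ∀ i, μ i = p i / (2 * |α|))
    (μ2 : Fin d → Fin d → ℝ)
    (hμ2 : ∀ i j, μ2 i j =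
      p i * (|α| * (if i = j then 1 else 0) + θ * p j) / (2 * α ^ 2 * (|α| + θ))) :
    ∀ r s, (if r = s then μ r else 0) - |α| * μ2 r s +
      ∑ i, (γ i r * μ2 i s + γ i s * μ2 i r) = 0 := by
  intro r s
  have habs : |α| = -α := abs_of_neg hα
  have hα0 : α ≠ 0 := ne_of_lt hα
  have hC : 2 * α ^ 2 * (|α| + θ) ≠ 0 := by
    have h1 : (0:ℝ) < |α| + θ := add_pos (abs_pos.mpr hα0) hθ
    positivity
  -- column sums of μ2
  have hcol : ∀ u, ∑ i, μ2 i u = p u / (2 * α ^ 2) := by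
    intro u
    have : ∀ i, μ2 i u = (if i = u then p i * |α| / (2 * α ^ 2 * (|α| + θ)) else 0)
        + p i * (θ * p u / (2 * α ^ 2 * (|α| + θ))) := by
      intro i
      rw [hμ2]
      by_cases h : i = u <;> simp [h] <;> field_simp <;> ring
    rw [Finset.sum_congr rfl fun i _ => this i, Finset.sum_add_distrib,
      Finset.sum_ite_eq' Finset.univ u _, ← Finset.sum_mul, hpsum]
    simp only [Finset.mem_univ, if_true, one_mul]
    field_simp
  -- the generic sum
  have hsum : ∀ t u : Fin d, ∑ i, γ i t * μ2 i u
      = θ / 2 * (p t * (p u / (2 * α ^ 2)) - μ2 t u) := by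
    intro t u
    have : ∀ i, γ i t * μ2 i u
        = θ / 2 * p t * μ2 i u - θ / 2 * (if i = t then μ2 i u else 0) := by
      intro i
      rw [hγ]
      by_cases h : i = t <;> simp [h] <;> ring
    rw [Finset.sum_congr rfl fun i _ => this i, Finset.sum_sub_distrib,
      ← Finset.mul_sum, ← Finset.mul_sum, Finset.sum_ite_eq' Finset.univ t _, hcol]
    simp only [Finset.mem_univ, if_true]
    ring
  have hsplit : ∑ i, (γ i r * μ2 i s + γ i s * μ2 i r)
      = (∑ i, γ i r * μ2 i s) + ∑ i, γ i s * μ2 i r := Finset.sum_add_distrib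
  rw [hsplit, hsum r s, hsum s r, hμ, hμ2 r s, hμ2 s r]
  have h1 : (0:ℝ) < |α| + θ := add_pos (abs_pos.mpr hα0) hθ
  by_cases h : r = s
  · subst h
    simp only [if_true]
    rw [habs] at *
    field_simp
    ring
  · have h' : ¬ s = r := fun e => h e.symm
    simp only [h, h', if_false]
    rw [habs] at *
    field_simp
    ring
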